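/- Akin's lemma for multichannel games: if player j uses a memory-one strategy T_j(·|·) and P* is the limit-of-time-averages distribution of action profiles, then for every action ā_j of player j, Σ_{a'} (T_j(ā_j | a') − δ_{ā_j, a'_j}) P*(a') = 0, where a'_j denotes player j's component of the profile a'. -/

import Mathlib

open Filter

/-- **Akin's lemma for multichannel games.**
`𝒜` is the finite set of action profiles, `𝒜j` the finite set of player j's
(multichannel) actions, and `π` extracts player j's component of a profile.
`T` is player j's memory-one strategy, `P t` is the distribution of the action
profile at round `t` (rounds are `1, 2, ...`, so round `t` is `P t`), and
`Pstar` is the limit of the time averages of the `P t`.  The hypothesis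
`hmarg` is the marginal consistency: the probability that player j plays
`aj` at round `t+1` equals `∑_{a'} T aj a' * P t a'`. -/
theorem akin_lemma_multichannel {𝒜 𝒜j : Type*} [Fintype 𝒜] [Nonempty 𝒜]
    [Fintype 𝒜j] [DecidableEq 𝒜j] (π : 𝒜 → 𝒜j)
    (T : 𝒜j → 𝒜 → ℝ) (P : ℕ → 𝒜 → ℝ) (Pstar : 𝒜 → ℝ)
    (hT_nonneg : ∀ aj a', 0 ≤ T aj a')
    (hT_sum : ∀ a', ∑ aj, T aj a' = 1)
    (hP_nonneg : ∀ t a, 0 ≤ P t a)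
    (hP_sum : ∀ t, ∑ a, P t a = 1)
    (hlim : ∀ a : 𝒜,
      Tendsto (fun n : ℕ => (1 / (n : ℝ)) * ∑ t ∈ Finset.range n, P (t + 1) a)
        atTop (nhds (Pstar a)))
    (hmarg : ∀ t : ℕ, ∀ aj : 𝒜j,
      ∑ a', T aj a' * P t a' = ∑ a ∈ Finset.univ.filter (fun a => π a = aj), P (t + 1) a) :
    ∀ aj : 𝒜j,
      ∑ a', (T aj a' - (if π a' = aj then (1 : ℝ) else 0)) * Pstar a' = 0 := by
  intro aj
  classical
  set f : ℕ → ℝ := fun t => ∑ a ∈ Finset.univ.filter (fun a => π a = aj), P t a with hf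
  -- per-step identity
  have hstep : ∀ t : ℕ,
      (∑ a', (T aj a' - (if π a' = aj then (1 : ℝ) else 0)) * P (t + 1) a')
        = f (t + 2) - f (t + 1) := by
    intro t
    have h1 : ∑ a', T aj a' * P (t + 1) a' = f (t + 2) := by
      simpa using hmarg (t + 1) aj
    have h2 : ∑ a', (if π a' = aj then (1 : ℝ) else 0) * P (t + 1) a' = f (t + 1) := by
      show _ = ∑ a ∈ Finset.filter (fun a => π a = aj) Finset.univ, P (t + 1) a
      rw [Finset.sum_filter]
      apply Finset.sum_congr rfl
      intro a _
      by_cases h : π a = aj <;> simp [h]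
    calc ∑ a', (T aj a' - (if π a' = aj then (1 : ℝ) else 0)) * P (t + 1) a'
        = (∑ a', T aj a' * P (t + 1) a')
          - ∑ a', (if π a' = aj then (1 : ℝ) else 0) * P (t + 1) a' := by
          rw [← Finset.sum_sub_distrib]
          apply Finset.sum_congr rfl
          intro a _; ring
      _ = f (t + 2) - f (t + 1) := by rw [h1, h2]
  -- the averaged sequence
  have hA : Tendsto
      (fun n : ℕ => (1 / (n : ℝ)) * ∑ t ∈ Finset.range n,
        ∑ a', (T aj a' - (if π a' = aj then (1 : ℝ) else 0)) * P (t + 1) a')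
      atTop
      (nhds (∑ a', (T aj a' - (if π a' = aj then (1 : ℝ) else 0)) * Pstar a')) := by
    have : ∀ n : ℕ, (1 / (n : ℝ)) * ∑ t ∈ Finset.range n,
        ∑ a', (T aj a' - (if π a' = aj then (1 : ℝ) else 0)) * P (t + 1) a'
        = ∑ a', (T aj a' - (if π a' = aj then (1 : ℝ) else 0))
            * ((1 / (n : ℝ)) * ∑ t ∈ Finset.range n, P (t + 1) a') := by
      intro n
      rw [Finset.sum_comm, Finset.mul_sum]
      apply Finset.sum_congr rfl
      intro a _
      rw [← Finset.mul_sum]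
      ring
    simp only [this]
    apply tendsto_finset_sum
    intro a _
    exact (hlim a).const_mul _
  -- telescoping
  have htel : ∀ n : ℕ,
      (∑ t ∈ Finset.range n,
        ∑ a', (T aj a' - (if π a' = aj then (1 : ℝ) else 0)) * P (t + 1) a')
      = f (n + 1) - f 1 := by
    intro n
    rw [Finset.sum_congr rfl (fun t _ => hstep t)]
    have := Finset.sum_range_sub (fun t => f (t + 1)) n
    simpa using this
  -- bound on f
  have hfbdd : ∀ t, |f t| ≤ 1 := by
    intro t
    have h0 : 0 ≤ f t := Finset.sum_nonneg fun a _ => hP_nonneg t a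
    have h1 : f t ≤ 1 := by
      rw [← hP_sum t]
      exact Finset.sum_le_sum_of_subset_of_nonneg (Finset.filter_subset _ _)
        (fun a _ _ => hP_nonneg t a)
    rw [abs_of_nonneg h0]; exact h1
  -- the averaged sequence tends to 0
  have hB : Tendsto
      (fun n : ℕ => (1 / (n : ℝ)) * ∑ t ∈ Finset.range n,
        ∑ a', (T aj a' - (if π a' = aj then (1 : ℝ) else 0)) * P (t + 1) a')
      atTop (nhds 0) := by
    refine squeeze_zero_norm (a := fun n : ℕ => 2 / (n : ℝ)) ?_ ?_
    · intro n
      rw [htel n]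
      rw [norm_mul]
      have h1 : ‖(1 / (n : ℝ))‖ = 1 / (n : ℝ) := by
        rw [Real.norm_eq_abs, abs_of_nonneg]
        positivity
      have h2 : ‖f (n + 1) - f 1‖ ≤ 2 := by
        calc ‖f (n + 1) - f 1‖ ≤ |f (n + 1)| + |f 1| := abs_sub _ _
          _ ≤ 1 + 1 := add_le_add (hfbdd _) (hfbdd _)
          _ = 2 := by norm_num
      calc ‖(1 / (n : ℝ))‖ * ‖f (n + 1) - f 1‖ ≤ (1 / (n : ℝ)) * 2 := by
            rw [h1]
            apply mul_le_mul_of_nonneg_left h2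
            positivity
        _ = 2 / (n : ℝ) := by ring
    · have : Tendsto (fun n : ℕ => 2 * (1 / (n : ℝ))) atTop (nhds (2 * 0)) :=
        tendsto_one_div_atTop_nhds_zero_nat.const_mul 2
      simpa [div_eq_mul_inv] using this
  exact tendsto_nhds_unique hA hB
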